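/- Let H_b ∈ ℂ^{N_r×N_t} and H_e ∈ ℂ^{N_e×N_t} be complex matrices such that Δ := H_bᴴH_b − H_eᴴH_e is positive semidefinite, and let X ∈ ℂ^{N_t×N_t} be Hermitian positive semidefinite. Then det(I + H_b X H_bᴴ) / det(I + H_e X H_eᴴ) = det(I + Δ^{1/2} X Δ^{1/2} − Δ^{1/2} X H_eᴴ (I + H_e X H_eᴴ)^{-1} H_e X Δ^{1/2}), where Δ^{1/2} is the unique positive semidefinite square root of Δ. -/

import Mathlib

open Matrix
open scoped ComplexOrder

noncomputable def Matrix.PosSemidef.sqrt {n 𝕜 : Type*} [Fintype n] [DecidableEq n] [RCLike 𝕜]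
    {A : Matrix n n 𝕜} (hA : A.PosSemidef) : Matrix n n 𝕜 :=
  hA.1.eigenvectorUnitary.1 * diagonal ((↑) ∘ (√·) ∘ hA.1.eigenvalues) *
  (star hA.1.eigenvectorUnitary : Matrix n n 𝕜)

theorem psd_sqrt_mul_self_aux {n 𝕜 : Type*} [Fintype n] [DecidableEq n] [RCLike 𝕜]
    {A : Matrix n n 𝕜} (hA : A.PosSemidef) : hA.sqrt * hA.sqrt = A := by
  have hU : (star hA.1.eigenvectorUnitary : Matrix n n 𝕜) * hA.1.eigenvectorUnitary.1 = 1 :=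
    Unitary.coe_star_mul_self _
  conv_rhs => rw [hA.1.spectral_theorem, Unitary.conjStarAlgAut_apply]
  unfold Matrix.PosSemidef.sqrt
  rw [show ∀ a b c d e f : Matrix n n 𝕜, a * b * c * (d * e * f) = a * (b * (c * d) * e) * f by
    intros; simp only [Matrix.mul_assoc]]
  rw [hU, Matrix.mul_one, diagonal_mul_diagonal]
  congr 3
  funext i
  simp only [Function.comp_apply]
  rw [← RCLike.ofReal_mul, Real.mul_self_sqrt (hA.eigenvalues_nonneg i)]

theorem psd_sqrt_conjTranspose_aux {n 𝕜 : Type*} [Fintype n] [DecidableEq n] [RCLike 𝕜]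
    {A : Matrix n n 𝕜} (hA : A.PosSemidef) : hA.sqrtᴴ = hA.sqrt := by
  unfold Matrix.PosSemidef.sqrt
  rw [conjTranspose_mul, conjTranspose_mul, diagonal_conjTranspose, Matrix.mul_assoc]
  simp only [Matrix.star_eq_conjTranspose, conjTranspose_conjTranspose]
  rw [show star (RCLike.ofReal ∘ (fun x : ℝ => √x) ∘ hA.1.eigenvalues : n → 𝕜)
      = RCLike.ofReal ∘ (fun x : ℝ => √x) ∘ hA.1.eigenvalues from
    funext fun i => RCLike.conj_ofReal _]

/-- the form of the secrecy-rate determinant after applying the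
matrix inversion lemma (proof of Lemma 1 of the paper). -/
theorem stmt_1 {Nr Nt Ne : ℕ}
    (Hb : Matrix (Fin Nr) (Fin Nt) ℂ) (He : Matrix (Fin Ne) (Fin Nt) ℂ)
    (X : Matrix (Fin Nt) (Fin Nt) ℂ) (hX : X.PosSemidef)
    (hΔ : (Hbᴴ * Hb - Heᴴ * He).PosSemidef) :
    (1 + Hb * X * Hbᴴ).det / (1 + He * X * Heᴴ).det
      = (1 + hΔ.sqrt * X * hΔ.sqrt
          - hΔ.sqrt * X * Heᴴ * (1 + He * X * Heᴴ)⁻¹ * He * X * hΔ.sqrt).det := by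
  set S := hΔ.sqrt with hSdef
  have hS2 : S * S = Hbᴴ * Hb - Heᴴ * He := psd_sqrt_mul_self_aux hΔ
  have hSS : Sᴴ = S := psd_sqrt_conjTranspose_aux hΔ
  set M := 1 + He * X * Heᴴ with hMdef
  have hMpd : M.PosDef :=
    Matrix.PosDef.add_posSemidef Matrix.PosDef.one (hX.mul_mul_conjTranspose_same He)
  have hMdet : M.det ≠ 0 := ne_of_gt hMpd.det_pos
  haveI : Invertible M := invertibleOfIsUnitDet M (isUnit_iff_ne_zero.mpr hMdet)
  have key : (1 + Hb * X * Hbᴴ).det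
      = M.det * (1 + S * X * S - S * X * Heᴴ * M⁻¹ * (He * X * S)).det := by
    have h1 : ((1 : Matrix (Fin Ne ⊕ Fin Nt) (Fin Ne ⊕ Fin Nt) ℂ)
        + (fromRows He S) * X * (fromRows He S)ᴴ).det
        = (1 + Hb * X * Hbᴴ).det := by
      rw [Matrix.mul_assoc, det_one_add_mul_comm,
        conjTranspose_fromRows_eq_fromCols_conjTranspose, hSS, Matrix.mul_assoc X,
        fromCols_mul_fromRows]
      have hXB : X * (Heᴴ * He + S * S) = X * Hbᴴ * Hb := by
        rw [hS2, add_sub_cancel, Matrix.mul_assoc]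
      rw [hXB, det_one_add_mul_comm, ← Matrix.mul_assoc]
    have h2 : ((1 : Matrix (Fin Ne ⊕ Fin Nt) (Fin Ne ⊕ Fin Nt) ℂ)
        + (fromRows He S) * X * (fromRows He S)ᴴ)
        = fromBlocks M (He * X * S) (S * X * Heᴴ) (1 + S * X * S) := by
      rw [conjTranspose_fromRows_eq_fromCols_conjTranspose, hSS, fromRows_mul,
        fromRows_mul_fromCols, ← fromBlocks_one, fromBlocks_add, hMdef]
      simp
    rw [← h1, h2, det_fromBlocks₁₁, invOf_eq_nonsing_inv]
  have hF : S * X * Heᴴ * M⁻¹ * (He * X * S) = S * X * Heᴴ * M⁻¹ * He * X * S := by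
    simp only [Matrix.mul_assoc]
  rw [key, hF]
  exact mul_div_cancel_left₀ _ hMdet
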